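/- Let κ and λ be infinite cardinals, let S be a ⟨∨,0⟩-semilattice, let (a_ξ)_{ξ<κ} be an increasing family in S with a_0 = 0 and let (b_η)_{η<λ} be a decreasing family in S with a_ξ ≤ b_η for all ξ < κ and η < λ. Then the map μ : P_{κ,λ} × P_{κ,λ} → S defined by μ(x,y) = σ(x \ y) is an S-valued measure on the partial lattice P_{κ,λ}, i.e.: (1) μ(x,y) = 0 whenever x ≤ y; (2) μ(x,z) ≤ μ(x,y) ∨ μ(y,z) for all x, y, z ∈ P_{κ,λ}; (3) μ(a,b) = ⋁_{x∈X} μ(x,b) whenever X is a nonempty finite subset of P_{κ,λ} whose join ⋁X, computed in A_{κ,λ}, equals a and lies in P_{κ,λ}; (4) μ(a,b) = ⋁_{y∈Y} μ(a,y) whenever Y is a nonempty finite subset of P_{κ,λ} whose meet ⋀Y, computed in A_{κ,λ}, equals b and lies in P_{κ,λ}. -/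

import Mathlib

open Set Cardinal

/-- Membership in the Boolean subalgebra of the powerset of `P` generated by the
lower subsets of `P`: the smallest family of subsets of `P` containing all lower
sets and closed under complementation and (binary) union (hence also under binary
intersection, and containing `∅` and `P`). -/
inductive IntMem (P : Type*) [Preorder P] : Set P → Prop
  | lower (s : Set P) : IsLowerSet s → IntMem P s
  | compl (s : Set P) : IntMem P s → IntMem P sᶜ
  | union (s t : Set P) : IntMem P s → IntMem P t → IntMem P (s ∪ t)

/-- `Int P`: the Boolean subalgebra of the powerset of `P` generated by the lower subsets
of `P`, viewed as a set of subsets of `P`. -/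
def IntP (P : Type*) [Preorder P] : Set (Set P) := {s | IntMem P s}

open Classical in
/-- `χ_o` : sends a subset of `{β | β < o}` to `false` if it is bounded (contained in some
`α < o`) and to `true` otherwise. -/
noncomputable def chiO (o : Ordinal) (x : Set ↥(Set.Iio o)) : Bool :=
  if ∃ α < o, ∀ β ∈ x, (β : Ordinal) < α then false else true

/-- The ambient Boolean algebra `(Set κ) × (Set λ) × (Set λ)` in which
`A_{κ,λ} = Int κ × Int λ × Int λ` lives. -/
abbrev Amb (κ lam : Cardinal) : Type _ :=
  Set ↥(Set.Iio κ.ord) × Set ↥(Set.Iio lam.ord) × Set ↥(Set.Iio lam.ord)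

/-- `A_{κ,λ} = Int κ × Int λ × Int λ`. -/
def ASet (κ lam : Cardinal) : Set (Amb κ lam) :=
  {p | p.1 ∈ IntP ↥(Set.Iio κ.ord) ∧ p.2.1 ∈ IntP ↥(Set.Iio lam.ord) ∧
       p.2.2 ∈ IntP ↥(Set.Iio lam.ord)}

/-- `U_{κ,λ} = {⟨x0,x1,x2⟩ ∈ A_{κ,λ} : χ_κ(x0) = χ_λ(x1) = χ_λ(x2)}`. -/
def USet (κ lam : Cardinal) : Set (Amb κ lam) :=
  {p ∈ ASet κ lam | chiO κ.ord p.1 = chiO lam.ord p.2.1 ∧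
    chiO lam.ord p.2.1 = chiO lam.ord p.2.2}

/-- `V_{κ,λ} = {⟨x0,x1,x2⟩ ∈ A_{κ,λ} : χ_κ(x0) = χ_λ(x1)}`. -/
def VSet (κ lam : Cardinal) : Set (Amb κ lam) :=
  {p ∈ ASet κ lam | chiO κ.ord p.1 = chiO lam.ord p.2.1}

/-- `P*_{κ,λ} = {⟨x0,x1,x2⟩ ∈ A_{κ,λ} : χ_κ(x0) = 0 or x1 ∪ x2 ≠ ∅}`. -/
def PstarSet (κ lam : Cardinal) : Set (Amb κ lam) :=
  {p ∈ ASet κ lam | chiO κ.ord p.1 = false ∨ p.2.1 ∪ p.2.2 ≠ ∅}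

/-- `P_{κ,λ} = {⟨x0,x1,x2⟩ ∈ A_{κ,λ} : χ_κ(x0) = χ_λ(x1) ∨ χ_λ(x2)}`. -/
def PkSet (κ lam : Cardinal) : Set (Amb κ lam) :=
  {p ∈ ASet κ lam | chiO κ.ord p.1 = chiO lam.ord p.2.1 ⊔ chiO lam.ord p.2.2}

open Classical in
/-- The map `σ = σ_{⃗a,⃗b} : P*_{κ,λ} → S` : `σ(⟨x0,x1,x2⟩) = a_{sup x0}` if
`x1 ∪ x2 = ∅` (in which case `x0` is bounded, so `sup x0 < κ`), and
`σ(⟨x0,x1,x2⟩) = b_{min (x1 ∪ x2)}` otherwise.  (Outside of `P*_{κ,λ}` the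
value of this function is irrelevant; junk value `⊥` is used when the
corresponding index is out of range.) -/
noncomputable def sigmaM (κ lam : Cardinal) {S : Type*} [SemilatticeSup S] [OrderBot S]
    (a : ↥(Set.Iio κ.ord) → S) (b : ↥(Set.Iio lam.ord) → S) (p : Amb κ lam) : S :=
  if p.2.1 ∪ p.2.2 = ∅ then
    if h : sSup (Subtype.val '' p.1) < κ.ord then a ⟨sSup (Subtype.val '' p.1), h⟩ else ⊥
  else
    if h : sInf (Subtype.val '' (p.2.1 ∪ p.2.2)) < lam.ord then
      b ⟨sInf (Subtype.val '' (p.2.1 ∪ p.2.2)), h⟩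
    else ⊥

/-- The measure `μ = μ_{⃗a,⃗b}` on `P_{κ,λ}` : `μ(x, y) = σ(x \ y)`. -/
noncomputable def muM (κ lam : Cardinal) {S : Type*} [SemilatticeSup S] [OrderBot S]
    (a : ↥(Set.Iio κ.ord) → S) (b : ↥(Set.Iio lam.ord) → S) (p q : Amb κ lam) : S :=
  sigmaM κ lam a b (p \ q)


section AuxMeasure

variable {κ lam : Cardinal} {S : Type*} [SemilatticeSup S] [OrderBot S]
  {a : ↥(Set.Iio κ.ord) → S} {b : ↥(Set.Iio lam.ord) → S}

lemma chiO_eq_false_iff {o : Ordinal} {x : Set ↥(Set.Iio o)} :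
    chiO o x = false ↔ ∃ α < o, ∀ β ∈ x, (β : Ordinal) < α := by
  unfold chiO
  split <;> simp_all

lemma chiO_mono {o : Ordinal} {x y : Set ↥(Set.Iio o)} (h : x ⊆ y) (hx : chiO o x = true) :
    chiO o y = true := by
  rcases Bool.eq_false_or_eq_true (chiO o y) with hy | hy
  · exact hy
  · rw [chiO_eq_false_iff] at hy
    obtain ⟨α, hα, hbd⟩ := hy
    have : chiO o x = false := chiO_eq_false_iff.2 ⟨α, hα, fun β hβ => hbd β (h hβ)⟩
    simp [this] at hx

lemma intP_bounded_or_cobounded {o : Ordinal} (ho : 0 < o) {s : Set ↥(Set.Iio o)}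
    (hs : IntMem ↥(Set.Iio o) s) :
    (∃ α < o, ∀ β ∈ s, (β : Ordinal) < α) ∨
    (∃ α < o, ∀ β : ↥(Set.Iio o), α ≤ (β : Ordinal) → β ∈ s) := by
  induction hs with
  | lower s hs =>
    by_cases h : ∀ β : ↥(Set.Iio o), β ∈ s
    · exact Or.inr ⟨0, ho, fun β _ => h β⟩
    · push_neg at h
      obtain ⟨β, hβ⟩ := h
      refine Or.inl ⟨β, β.2, fun γ hγ => ?_⟩
      by_contra hc
      push_neg at hc
      exact hβ (hs (Subtype.coe_le_coe.1 hc) hγ)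
  | compl s _ ih =>
    rcases ih with ⟨α, hα, h⟩ | ⟨α, hα, h⟩
    · exact Or.inr ⟨α, hα, fun β hβ hmem => absurd (h β hmem) (not_lt.2 hβ)⟩
    · refine Or.inl ⟨α, hα, fun β hβ => ?_⟩
      by_contra hc
      exact hβ (h β (not_lt.1 hc))
  | union s t _ _ ihs iht =>
    rcases ihs with ⟨α, hα, h⟩ | ⟨α, hα, h⟩
    · rcases iht with ⟨α', hα', h'⟩ | ⟨α', hα', h'⟩
      · refine Or.inl ⟨max α α', max_lt hα hα', fun β hβ => ?_⟩
        rcases hβ with hβ | hβ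
        · exact lt_of_lt_of_le (h β hβ) (le_max_left _ _)
        · exact lt_of_lt_of_le (h' β hβ) (le_max_right _ _)
      · exact Or.inr ⟨α', hα', fun β hβ => Or.inr (h' β hβ)⟩
    · exact Or.inr ⟨α, hα, fun β hβ => Or.inl (h β hβ)⟩

/-- The key boundedness condition: if the second and third components are empty then
the first component is bounded. -/
def Pcond (κ lam : Cardinal) (r : Amb κ lam) : Prop :=
  r.2.1 ∪ r.2.2 = ∅ → ∃ α < κ.ord, ∀ β ∈ r.1, (β : Ordinal) < α

lemma sSup_lt_of_bounded {o : Ordinal} {x : Set ↥(Set.Iio o)}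
    (h : ∃ α < o, ∀ β ∈ x, (β : Ordinal) < α) : sSup (Subtype.val '' x) < o := by
  obtain ⟨α, hα, hbd⟩ := h
  refine lt_of_le_of_lt (csSup_le' ?_) hα
  rintro β ⟨γ, hγ, rfl⟩
  exact (hbd γ hγ).le

lemma sInf_lt_of_ne {o : Ordinal} {x : Set ↥(Set.Iio o)} (h : x ≠ ∅) :
    sInf (Subtype.val '' x) < o := by
  obtain ⟨γ, hγ⟩ := Set.nonempty_iff_ne_empty.2 h
  exact lt_of_le_of_lt (csInf_le (OrderBot.bddBelow _) ⟨γ, hγ, rfl⟩) γ.2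

lemma bddAbove_val_image {o : Ordinal} (x : Set ↥(Set.Iio o)) :
    BddAbove (Subtype.val '' x) := by
  refine ⟨o, ?_⟩
  rintro β ⟨γ, _, rfl⟩
  exact γ.2.le

lemma ord_sSup_union {A B : Set Ordinal} (hA : BddAbove A) (hB : BddAbove B) :
    sSup (A ∪ B) = sSup A ⊔ sSup B := by
  rcases A.eq_empty_or_nonempty with rfl | hA'
  · simp
  rcases B.eq_empty_or_nonempty with rfl | hB'
  · simp
  exact csSup_union hA hA' hB hB'

lemma ord_sInf_union {A B : Set Ordinal} (hA : A.Nonempty) (hB : B.Nonempty) :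
    sInf (A ∪ B) = min (sInf A) (sInf B) := by
  apply le_antisymm
  · exact le_min (csInf_le_csInf (OrderBot.bddBelow _) hA Set.subset_union_left)
      (csInf_le_csInf (OrderBot.bddBelow _) hB Set.subset_union_right)
  · rcases csInf_mem (hA.mono (Set.subset_union_left (t := B))) with h | h
    · exact min_le_of_left_le (csInf_le (OrderBot.bddBelow _) h)
    · exact min_le_of_right_le (csInf_le (OrderBot.bddBelow _) h)

lemma sigmaM_of_empty (p : Amb κ lam) (h : p.2.1 ∪ p.2.2 = ∅)
    (h' : sSup (Subtype.val '' p.1) < κ.ord) :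
    sigmaM κ lam a b p = a ⟨sSup (Subtype.val '' p.1), h'⟩ := by
  rw [sigmaM, if_pos h, dif_pos h']

lemma sigmaM_of_nonempty (p : Amb κ lam) (h : p.2.1 ∪ p.2.2 ≠ ∅)
    (h' : sInf (Subtype.val '' (p.2.1 ∪ p.2.2)) < lam.ord) :
    sigmaM κ lam a b p = b ⟨sInf (Subtype.val '' (p.2.1 ∪ p.2.2)), h'⟩ := by
  rw [sigmaM, if_neg h, dif_pos h']

lemma amb_sup_fst (r r' : Amb κ lam) : (r ⊔ r').1 = r.1 ∪ r'.1 := rfl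

lemma amb_sup_snd (r r' : Amb κ lam) :
    (r ⊔ r').2.1 ∪ (r ⊔ r').2.2 = (r.2.1 ∪ r.2.2) ∪ (r'.2.1 ∪ r'.2.2) := by
  show (r.2.1 ∪ r'.2.1) ∪ (r.2.2 ∪ r'.2.2) = _
  ext x
  simp only [Set.mem_union]
  tauto

lemma sigma_sup (ha : Monotone a) (hb : Antitone b) (hab : ∀ ξ η, a ξ ≤ b η)
    (r r' : Amb κ lam) (hr : Pcond κ lam r) (hr' : Pcond κ lam r') :
    sigmaM κ lam a b (r ⊔ r') = sigmaM κ lam a b r ⊔ sigmaM κ lam a b r' := by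
  by_cases e : r.2.1 ∪ r.2.2 = ∅
  · by_cases e' : r'.2.1 ∪ r'.2.2 = ∅
    · -- both bounded case
      have hTe : (r ⊔ r').2.1 ∪ (r ⊔ r').2.2 = ∅ := by
        rw [amb_sup_snd, e, e', Set.union_empty]
      have hs : sSup (Subtype.val '' r.1) < κ.ord := sSup_lt_of_bounded (hr e)
      have hs' : sSup (Subtype.val '' r'.1) < κ.ord := sSup_lt_of_bounded (hr' e')
      have hU : sSup (Subtype.val '' (r ⊔ r').1)
          = sSup (Subtype.val '' r.1) ⊔ sSup (Subtype.val '' r'.1) := by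
        rw [amb_sup_fst, Set.image_union]
        exact ord_sSup_union (bddAbove_val_image _) (bddAbove_val_image _)
      have hsu : sSup (Subtype.val '' (r ⊔ r').1) < κ.ord := by
        rw [hU]; exact sup_lt_iff.2 ⟨hs, hs'⟩
      rw [sigmaM_of_empty _ hTe hsu, sigmaM_of_empty _ e hs, sigmaM_of_empty _ e' hs']
      rcases le_total (sSup (Subtype.val '' r.1)) (sSup (Subtype.val '' r'.1)) with hle | hle
      · rw [sup_eq_right.2 (ha (Subtype.mk_le_mk.2 hle) : a ⟨_, hs⟩ ≤ a ⟨_, hs'⟩)]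
        congr 1
        apply Subtype.ext
        show sSup (Subtype.val '' (r ⊔ r').1) = _
        rw [hU]
        exact sup_eq_right.2 hle
      · rw [sup_eq_left.2 (ha (Subtype.mk_le_mk.2 hle) : a ⟨_, hs'⟩ ≤ a ⟨_, hs⟩)]
        congr 1
        apply Subtype.ext
        show sSup (Subtype.val '' (r ⊔ r').1) = _
        rw [hU]
        exact sup_eq_left.2 hle
    · -- r bounded, r' with nonempty tail
      have hTe : (r ⊔ r').2.1 ∪ (r ⊔ r').2.2 = r'.2.1 ∪ r'.2.2 := by
        rw [amb_sup_snd, e, Set.empty_union]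
      have hne : (r ⊔ r').2.1 ∪ (r ⊔ r').2.2 ≠ ∅ := by rw [hTe]; exact e'
      have hi' : sInf (Subtype.val '' (r'.2.1 ∪ r'.2.2)) < lam.ord := sInf_lt_of_ne e'
      have hi : sInf (Subtype.val '' ((r ⊔ r').2.1 ∪ (r ⊔ r').2.2)) < lam.ord := by
        rw [hTe]; exact hi'
      have hs : sSup (Subtype.val '' r.1) < κ.ord := sSup_lt_of_bounded (hr e)
      rw [sigmaM_of_nonempty _ hne hi, sigmaM_of_empty _ e hs, sigmaM_of_nonempty _ e' hi']
      have heq : (⟨sInf (Subtype.val '' ((r ⊔ r').2.1 ∪ (r ⊔ r').2.2)), hi⟩ :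
          ↥(Set.Iio lam.ord)) = ⟨sInf (Subtype.val '' (r'.2.1 ∪ r'.2.2)), hi'⟩ := by
        apply Subtype.ext
        show sInf (Subtype.val '' ((r ⊔ r').2.1 ∪ (r ⊔ r').2.2)) = _
        rw [hTe]
      rw [heq]
      exact (sup_eq_right.2 (hab _ _)).symm
  · by_cases e' : r'.2.1 ∪ r'.2.2 = ∅
    · -- symmetric mixed case
      have hTe : (r ⊔ r').2.1 ∪ (r ⊔ r').2.2 = r.2.1 ∪ r.2.2 := by
        rw [amb_sup_snd, e', Set.union_empty]
      have hne : (r ⊔ r').2.1 ∪ (r ⊔ r').2.2 ≠ ∅ := by rw [hTe]; exact e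
      have hi' : sInf (Subtype.val '' (r.2.1 ∪ r.2.2)) < lam.ord := sInf_lt_of_ne e
      have hi : sInf (Subtype.val '' ((r ⊔ r').2.1 ∪ (r ⊔ r').2.2)) < lam.ord := by
        rw [hTe]; exact hi'
      have hs : sSup (Subtype.val '' r'.1) < κ.ord := sSup_lt_of_bounded (hr' e')
      rw [sigmaM_of_nonempty _ hne hi, sigmaM_of_nonempty _ e hi', sigmaM_of_empty _ e' hs]
      have heq : (⟨sInf (Subtype.val '' ((r ⊔ r').2.1 ∪ (r ⊔ r').2.2)), hi⟩ :
          ↥(Set.Iio lam.ord)) = ⟨sInf (Subtype.val '' (r.2.1 ∪ r.2.2)), hi'⟩ := by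
        apply Subtype.ext
        show sInf (Subtype.val '' ((r ⊔ r').2.1 ∪ (r ⊔ r').2.2)) = _
        rw [hTe]
      rw [heq]
      exact (sup_eq_left.2 (hab _ _)).symm
    · -- both nonempty tails
      have hne : (r ⊔ r').2.1 ∪ (r ⊔ r').2.2 ≠ ∅ := by
        rw [amb_sup_snd]
        intro h
        exact e (Set.union_empty_iff.1 h).1
      have hi1 : sInf (Subtype.val '' (r.2.1 ∪ r.2.2)) < lam.ord := sInf_lt_of_ne e
      have hi2 : sInf (Subtype.val '' (r'.2.1 ∪ r'.2.2)) < lam.ord := sInf_lt_of_ne e'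
      have hU : sInf (Subtype.val '' ((r ⊔ r').2.1 ∪ (r ⊔ r').2.2))
          = min (sInf (Subtype.val '' (r.2.1 ∪ r.2.2)))
              (sInf (Subtype.val '' (r'.2.1 ∪ r'.2.2))) := by
        rw [amb_sup_snd, Set.image_union]
        exact ord_sInf_union
          ((Set.nonempty_iff_ne_empty.2 e).image _) ((Set.nonempty_iff_ne_empty.2 e').image _)
      have hi : sInf (Subtype.val '' ((r ⊔ r').2.1 ∪ (r ⊔ r').2.2)) < lam.ord := by
        rw [hU]; exact lt_of_le_of_lt (min_le_left _ _) hi1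
      rw [sigmaM_of_nonempty _ hne hi, sigmaM_of_nonempty _ e hi1, sigmaM_of_nonempty _ e' hi2]
      rcases le_total (sInf (Subtype.val '' (r.2.1 ∪ r.2.2)))
          (sInf (Subtype.val '' (r'.2.1 ∪ r'.2.2))) with hle | hle
      · rw [sup_eq_left.2 (hb (Subtype.mk_le_mk.2 hle) : b ⟨_, hi2⟩ ≤ b ⟨_, hi1⟩)]
        congr 1
        apply Subtype.ext
        show sInf (Subtype.val '' ((r ⊔ r').2.1 ∪ (r ⊔ r').2.2)) = _
        rw [hU]
        exact min_eq_left hle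
      · rw [sup_eq_right.2 (hb (Subtype.mk_le_mk.2 hle) : b ⟨_, hi1⟩ ≤ b ⟨_, hi2⟩)]
        congr 1
        apply Subtype.ext
        show sInf (Subtype.val '' ((r ⊔ r').2.1 ∪ (r ⊔ r').2.2)) = _
        rw [hU]
        exact min_eq_right hle

lemma Pcond_sup {r r' : Amb κ lam} (hr : Pcond κ lam r) (hr' : Pcond κ lam r') :
    Pcond κ lam (r ⊔ r') := by
  intro h
  rw [amb_sup_snd, Set.union_empty_iff] at h
  obtain ⟨α, hα, hbd⟩ := hr h.1
  obtain ⟨α', hα', hbd'⟩ := hr' h.2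
  refine ⟨max α α', max_lt hα hα', ?_⟩
  rw [amb_sup_fst]
  rintro β (hβ | hβ)
  · exact lt_of_lt_of_le (hbd β hβ) (le_max_left _ _)
  · exact lt_of_lt_of_le (hbd' β hβ) (le_max_right _ _)

lemma sigma_le (ha : Monotone a) (hb : Antitone b) (hab : ∀ ξ η, a ξ ≤ b η)
    {r r' : Amb κ lam} (hr : Pcond κ lam r) (hr' : Pcond κ lam r') (h : r ≤ r') :
    sigmaM κ lam a b r ≤ sigmaM κ lam a b r' := by
  have h2 := sigma_sup ha hb hab r r' hr hr'
  rw [sup_eq_right.2 h] at h2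
  rw [h2]
  exact le_sup_left

lemma sigma_bot (hκ : (0 : Ordinal) < κ.ord)
    (ha0 : ∀ ξ : ↥(Set.Iio κ.ord), (ξ : Ordinal) = 0 → a ξ = ⊥) :
    sigmaM κ lam a b (⊥ : Amb κ lam) = ⊥ := by
  have h : (⊥ : Amb κ lam).2.1 ∪ (⊥ : Amb κ lam).2.2 = ∅ := by
    show (∅ : Set _) ∪ ∅ = ∅; simp
  have h0 : sSup (Subtype.val '' (⊥ : Amb κ lam).1) = 0 := by
    show sSup (Subtype.val '' (∅ : Set _)) = 0
    simp [csSup_empty]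
  have h' : sSup (Subtype.val '' (⊥ : Amb κ lam).1) < κ.ord := by rw [h0]; exact hκ
  rw [sigmaM_of_empty _ h h']
  exact ha0 _ h0

lemma Pcond_sdiff {x y : Amb κ lam} (hκ : (0 : Ordinal) < κ.ord)
    (hx : x ∈ PkSet κ lam) (hy : y ∈ PkSet κ lam) : Pcond κ lam (x \ y) := by
  intro h
  have hxy1 : (x \ y).2.1 = x.2.1 \ y.2.1 := rfl
  have hxy2 : (x \ y).2.2 = x.2.2 \ y.2.2 := rfl
  rw [hxy1, hxy2, Set.union_empty_iff] at h
  rcases Bool.eq_false_or_eq_true (chiO κ.ord x.1) with hc | hc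
  case inr =>
    obtain ⟨α, hα, hbd⟩ := chiO_eq_false_iff.1 hc
    exact ⟨α, hα, fun β hβ => hbd β hβ.1⟩
  case inl =>
    have h2 : chiO lam.ord x.2.1 = true ∨ chiO lam.ord x.2.2 = true := by
      have hxx := hx.2
      rw [hc] at hxx
      rcases Bool.eq_false_or_eq_true (chiO lam.ord x.2.1) with h1 | h1
      · exact Or.inl h1
      · rcases Bool.eq_false_or_eq_true (chiO lam.ord x.2.2) with h2 | h2
        · exact Or.inr h2
        · rw [h1, h2] at hxx
          exact absurd hxx (by decide)
    have hy0 : chiO κ.ord y.1 = true := by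
      rw [hy.2]
      rcases h2 with h2 | h2
      · have hsub : x.2.1 ⊆ y.2.1 := Set.diff_eq_empty.1 h.1
        have := chiO_mono hsub h2
        rw [this]
        simp
      · have hsub : x.2.2 ⊆ y.2.2 := Set.diff_eq_empty.1 h.2
        have := chiO_mono hsub h2
        rw [this]
        simp
    rcases intP_bounded_or_cobounded hκ hy.1.1 with ⟨α, hα, hbd⟩ | ⟨α, hα, hseg⟩
    · have : chiO κ.ord y.1 = false := chiO_eq_false_iff.2 ⟨α, hα, hbd⟩
      rw [hy0] at this
      exact absurd this (by simp)
    · refine ⟨α, hα, fun β hβ => ?_⟩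
      by_contra hc2
      push_neg at hc2
      exact hβ.2 (hseg β hc2)

lemma Pcond_finset_sup {ι : Type*} {X : Finset ι} (hX : X.Nonempty) (g : ι → Amb κ lam)
    (hg : ∀ x ∈ X, Pcond κ lam (g x)) : Pcond κ lam (X.sup g) := by
  induction hX using Finset.Nonempty.cons_induction with
  | singleton x => simpa using hg x (by simp)
  | cons x s hxs hs ih =>
    rw [Finset.sup_cons]
    exact Pcond_sup (hg x (Finset.mem_cons_self x s))
      (ih fun y hy => hg y (Finset.mem_cons_of_mem hy))

lemma sigma_finset_sup (ha : Monotone a) (hb : Antitone b) (hab : ∀ ξ η, a ξ ≤ b η)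
    {ι : Type*} {X : Finset ι} (hX : X.Nonempty) (g : ι → Amb κ lam)
    (hg : ∀ x ∈ X, Pcond κ lam (g x)) :
    sigmaM κ lam a b (X.sup g) = X.sup fun x => sigmaM κ lam a b (g x) := by
  induction hX using Finset.Nonempty.cons_induction with
  | singleton x => simp
  | cons x s hxs hs ih =>
    rw [Finset.sup_cons, Finset.sup_cons,
      sigma_sup ha hb hab _ _ (hg x (Finset.mem_cons_self x s))
        (Pcond_finset_sup hs g fun y hy => hg y (Finset.mem_cons_of_mem hy)),
      ih fun y hy => hg y (Finset.mem_cons_of_mem hy)]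

end AuxMeasure

/-- Under the same hypotheses as Statement 8, the map
`μ(x, y) = σ(x \ y)` is an `S`-valued measure on the partial lattice `P_{κ,λ}`:
(1) `μ(x,y) = 0` whenever `x ≤ y`;
(2) `μ(x,z) ≤ μ(x,y) ∨ μ(y,z)`;
(3) `μ(a,b) = ⋁_{x∈X} μ(x,b)` whenever `X` is a nonempty finite subset of `P_{κ,λ}`
whose join, computed in `A_{κ,λ}`, lies in `P_{κ,λ}` (and equals `a`);
(4) `μ(a,b) = ⋁_{y∈Y} μ(a,y)` whenever `Y` is a nonempty finite subset of `P_{κ,λ}`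
whose meet, computed in `A_{κ,λ}`, lies in `P_{κ,λ}` (and equals `b`). -/
theorem mu_is_measure (κ lam : Cardinal) (hκ : ℵ₀ ≤ κ) (hlam : ℵ₀ ≤ lam)
    {S : Type*} [SemilatticeSup S] [OrderBot S]
    (a : ↥(Set.Iio κ.ord) → S) (b : ↥(Set.Iio lam.ord) → S)
    (ha : Monotone a) (hb : Antitone b)
    (ha0 : ∀ ξ : ↥(Set.Iio κ.ord), (ξ : Ordinal) = 0 → a ξ = ⊥)
    (hab : ∀ ξ η, a ξ ≤ b η) :
    (∀ x ∈ PkSet κ lam, ∀ y ∈ PkSet κ lam, x ≤ y → muM κ lam a b x y = ⊥) ∧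
    (∀ x ∈ PkSet κ lam, ∀ y ∈ PkSet κ lam, ∀ z ∈ PkSet κ lam,
      muM κ lam a b x z ≤ muM κ lam a b x y ⊔ muM κ lam a b y z) ∧
    (∀ X : Finset (Amb κ lam), X.Nonempty → ↑X ⊆ PkSet κ lam → X.sup id ∈ PkSet κ lam →
      ∀ q ∈ PkSet κ lam, muM κ lam a b (X.sup id) q = X.sup fun x => muM κ lam a b x q) ∧
    (∀ Y : Finset (Amb κ lam), Y.Nonempty → ↑Y ⊆ PkSet κ lam → Y.inf id ∈ PkSet κ lam →
      ∀ p ∈ PkSet κ lam, muM κ lam a b p (Y.inf id) = Y.sup fun y => muM κ lam a b p y) := by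
  have hκ0 : (0 : Ordinal) < κ.ord := by
    have h1 : Cardinal.ord ℵ₀ ≤ κ.ord := Cardinal.ord_le_ord.2 hκ
    rw [Cardinal.ord_aleph0] at h1
    exact lt_of_lt_of_le Ordinal.omega0_pos h1
  refine ⟨?_, ?_, ?_, ?_⟩
  · intro x _ y _ hxy
    rw [muM, sdiff_eq_bot_iff.2 hxy, sigma_bot hκ0 ha0]
  · intro x hx y hy z hz
    have h := sigma_le ha hb hab (Pcond_sdiff hκ0 hx hz)
      (Pcond_sup (Pcond_sdiff hκ0 hx hy) (Pcond_sdiff hκ0 hy hz)) (sdiff_triangle x y z)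
    rwa [sigma_sup ha hb hab _ _ (Pcond_sdiff hκ0 hx hy) (Pcond_sdiff hκ0 hy hz)] at h
  · intro X hX hXP _ q hq
    simp only [muM]
    rw [← Finset.sup_sdiff_right X id q]
    exact sigma_finset_sup ha hb hab hX _ fun x hx => Pcond_sdiff hκ0 (hXP hx) hq
  · intro Y hY hYP _ p hp
    simp only [muM]
    rw [← Finset.sup_sdiff_left Y id p]
    exact sigma_finset_sup ha hb hab hY _ fun y hy => Pcond_sdiff hκ0 hp (hYP hy)
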